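/- Let w(x;c,d;q) = 1/((cx;q)_∞ (dx;q)_∞). Then for fixed z ≠ 0 and k → −∞, w(z q^k) = ((c d z²)^k q^(k(k−1)) / (θ(cz;q) θ(dz;q))) (1 + O(q^(−k))); more precisely, θ(cz;q) θ(dz;q) w(z q^k) (cdz²)^(−k) q^(−k(k−1)) → 1 as k → −∞. -/

import Mathlib

open scoped BigOperators

/-- q-Pochhammer infinite product `(a;q)_∞`. -/
noncomputable def qp (q a : ℂ) : ℂ := ∏' n : ℕ, (1 - a * q ^ n)

/-- q-Pochhammer `(a;q)_k`. -/
noncomputable def qpn (q a : ℂ) (k : ℕ) : ℂ := ∏ j ∈ Finset.range k, (1 - a * q ^ j)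

/-- theta function `θ(x;q) = (x;q)_∞ (q/x;q)_∞`. -/
noncomputable def theta (q x : ℂ) : ℂ := qp q x * qp q (q / x)

/-- the `₁φ₁(a;b;q,z)` series. -/
noncomputable def phi11 (q a b z : ℂ) : ℂ :=
  ∑' n : ℕ, qpn q a n / (qpn q q n * qpn q b n) * (-1) ^ n * q ^ (n * (n - 1) / 2) * z ^ n

/-- the terminating `₂φ₀(q^(-n),B;—;q,z)` series (Gasper–Rahman convention). -/
noncomputable def phi20 (q : ℂ) (n : ℕ) (B z : ℂ) : ℂ :=
  ∑ k ∈ Finset.range (n + 1),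
    qpn q ((q ^ n)⁻¹) k * qpn q B k / qpn q q k * (-1) ^ k * (q ^ (k * (k - 1) / 2))⁻¹ * z ^ k

section aux

open Filter Complex

variable {Q : ℂ}

lemma summable_log_qp (hQ : ‖Q‖ < 1) (a : ℂ) :
    Summable (fun n : ℕ => Complex.log (1 - a * Q ^ n)) := by
  have hgeo : Summable (fun n : ℕ => (3/2 : ℝ) * (‖a‖ * ‖Q‖ ^ n)) :=
    ((summable_geometric_of_lt_one (norm_nonneg Q) hQ).mul_left ‖a‖).mul_left _
  refine hgeo.of_norm_bounded_eventually_nat ?_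
  have h0 : Tendsto (fun n : ℕ => ‖a‖ * ‖Q‖ ^ n) atTop (nhds 0) := by
    have := tendsto_pow_atTop_nhds_zero_of_lt_one (norm_nonneg Q) hQ
    simpa using this.const_mul ‖a‖
  filter_upwards [h0.eventually_le_const (by norm_num : (0:ℝ) < 1/2)] with n hn
  have h1 : ‖-(a * Q ^ n)‖ ≤ 1/2 := by
    simpa [norm_mul, norm_pow] using hn
  calc ‖Complex.log (1 - a * Q ^ n)‖ = ‖Complex.log (1 + -(a * Q ^ n))‖ := by ring_nf
    _ ≤ 3/2 * ‖-(a * Q ^ n)‖ := Complex.norm_log_one_add_half_le_self h1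
    _ ≤ 3/2 * (‖a‖ * ‖Q‖ ^ n) := by simp [norm_mul, norm_pow]

lemma qp_hasProd (hQ : ‖Q‖ < 1) (a : ℂ) (h : ∀ n : ℕ, a * Q ^ n ≠ 1) :
    HasProd (fun n : ℕ => 1 - a * Q ^ n)
      (Complex.exp (∑' n : ℕ, Complex.log (1 - a * Q ^ n))) := by
  have h0 : ∀ n : ℕ, (1 : ℂ) - a * Q ^ n ≠ 0 := fun n hh =>
    h n (by linear_combination -hh)
  have h2 := ((summable_log_qp hQ a).hasSum).cexp
  have hfun : (cexp ∘ fun n : ℕ => Complex.log (1 - a * Q ^ n))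
      = fun n : ℕ => 1 - a * Q ^ n := funext fun n => Complex.exp_log (h0 n)
  rwa [hfun] at h2

lemma qp_ne_zero (hQ : ‖Q‖ < 1) (a : ℂ) (h : ∀ n : ℕ, a * Q ^ n ≠ 1) : qp Q a ≠ 0 := by
  rw [qp, (qp_hasProd hQ a h).tprod_eq]
  exact Complex.exp_ne_zero _

lemma qpn_tendsto (hQ : ‖Q‖ < 1) (a : ℂ) (h : ∀ n : ℕ, a * Q ^ n ≠ 1) :
    Tendsto (fun n : ℕ => qpn Q a n) atTop (nhds (qp Q a)) := by
  have h2 := (qp_hasProd hQ a h).tendsto_prod_nat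
  have h3 : qp Q a = Complex.exp (∑' n : ℕ, Complex.log (1 - a * Q ^ n)) :=
    (qp_hasProd hQ a h).tprod_eq
  rw [h3]
  exact h2

lemma qpn_ne_zero (a : ℂ) (h : ∀ n : ℕ, a * Q ^ n ≠ 1) (n : ℕ) : qpn Q a n ≠ 0 := by
  rw [qpn]
  exact Finset.prod_ne_zero_iff.mpr fun j _ => sub_ne_zero_of_ne (Ne.symm (h j))

lemma ne_pow_helper (hQ0 : Q ≠ 0) {a : ℂ} (ha : ∀ k : ℤ, a ≠ Q ^ k) (t : ℤ) :
    ∀ m : ℕ, a * Q ^ t * Q ^ m ≠ 1 := by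
  intro m h
  apply ha (-(t + m))
  rw [mul_assoc, ← zpow_natCast Q m, ← zpow_add₀ hQ0] at h
  rw [zpow_neg]
  exact eq_inv_of_mul_eq_one_left h

lemma div_ne_helper (hQ0 : Q ≠ 0) {a : ℂ} (ha0 : a ≠ 0) (ha : ∀ k : ℤ, a ≠ Q ^ k) :
    ∀ m : ℕ, Q / a * Q ^ m ≠ 1 := by
  intro m h
  apply ha ((m : ℤ) + 1)
  rw [div_mul_eq_mul_div, div_eq_one_iff_eq ha0] at h
  rw [zpow_add₀ hQ0, zpow_natCast, zpow_one]
  linear_combination -h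

lemma prod_zpow_sum (hQ0 : Q ≠ 0) (g : ℕ → ℤ) (s : Finset ℕ) :
    ∏ m ∈ s, Q ^ (g m) = Q ^ (∑ m ∈ s, g m) := by
  induction s using Finset.cons_induction with
  | empty => simp
  | cons a s ha ih => rw [Finset.prod_cons, Finset.sum_cons, ih, zpow_add₀ hQ0]

lemma qp_shift (hQ : ‖Q‖ < 1) (hQ0 : Q ≠ 0) {a : ℂ} (ha0 : a ≠ 0)
    (ha : ∀ k : ℤ, a ≠ Q ^ k) (n : ℕ) :
    qp Q (a * Q ^ (-(n:ℤ))) =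
      (-a) ^ n * Q ^ (∑ m ∈ Finset.range n, ((m:ℤ) - n)) * qpn Q (Q / a) n * qp Q a := by
  have hshift : ∀ i : ℕ, (1 : ℂ) - a * Q ^ (-(n:ℤ)) * Q ^ (i + n) = 1 - a * Q ^ i := by
    intro i
    congr 1
    rw [mul_assoc, ← zpow_natCast Q (i + n), ← zpow_add₀ hQ0, ← zpow_natCast Q i]
    congr 1
    push_cast; ring
  have hmult : Multipliable (fun m : ℕ => 1 - a * Q ^ (-(n:ℤ)) * Q ^ (m + n)) :=
    ((qp_hasProd hQ a (by simpa using ne_pow_helper hQ0 ha 0)).multipliable).congr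
      fun m => (hshift m).symm
  have hsplit := Multipliable.prod_mul_tprod_nat_mul' (f := fun m : ℕ => 1 - a * Q ^ (-(n:ℤ)) * Q ^ m)
    (k := n) hmult
  have hfin : ∀ m ∈ Finset.range n, (1 : ℂ) - a * Q ^ (-(n:ℤ)) * Q ^ m
      = (-a) * Q ^ ((m:ℤ) - n) * (1 - Q / a * Q ^ (n - 1 - m)) := by
    intro m hm
    have hmn : m < n := Finset.mem_range.mp hm
    have hcast : ((n - 1 - m : ℕ) : ℤ) = (n:ℤ) - 1 - m := by omega
    rw [← zpow_natCast Q (n - 1 - m), hcast,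
        mul_assoc a, ← zpow_natCast Q m, ← zpow_add₀ hQ0,
        show -(n:ℤ) + m = (m:ℤ) - n by ring]
    have e2 : Q ^ ((m:ℤ) - n) * Q ^ ((n:ℤ) - 1 - m) * Q = 1 := by
      have h12 : Q ^ ((m:ℤ) - n) * Q ^ ((n:ℤ) - 1 - m) = Q ^ (-1 : ℤ) := by
        rw [← zpow_add₀ hQ0]; congr 1; ring
      rw [h12, zpow_neg_one, inv_mul_cancel₀ hQ0]
    field_simp
    linear_combination (-1 : ℂ) * e2
  calc qp Q (a * Q ^ (-(n:ℤ)))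
      = (∏ m ∈ Finset.range n, (1 - a * Q ^ (-(n:ℤ)) * Q ^ m)) *
        ∏' i : ℕ, (1 - a * Q ^ (-(n:ℤ)) * Q ^ (i + n)) := by
        rw [qp, ← hsplit]
    _ = (∏ m ∈ Finset.range n, ((-a) * Q ^ ((m:ℤ) - n) * (1 - Q / a * Q ^ (n - 1 - m)))) *
        qp Q a := by
        rw [Finset.prod_congr rfl hfin, qp, tprod_congr hshift]
    _ = (-a) ^ n * Q ^ (∑ m ∈ Finset.range n, ((m:ℤ) - n)) * qpn Q (Q / a) n * qp Q a := by
        rw [Finset.prod_mul_distrib, Finset.prod_mul_distrib, Finset.prod_const,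
          prod_zpow_sum hQ0, Finset.prod_range_reflect (fun j => 1 - Q / a * Q ^ j) n, qpn,
          Finset.card_range]

lemma sum_range_sub_two_mul (n : ℕ) :
    (∑ m ∈ Finset.range n, ((m:ℤ) - n)) * 2 = -((n:ℤ) * ((n:ℤ) + 1)) := by
  have h2 : (∑ m ∈ Finset.range n, (m:ℤ)) * 2 = (n:ℤ) * ((n:ℤ) - 1) := by
    induction n with
    | zero => simp
    | succ k ih =>
      rw [Finset.sum_range_succ, add_mul, ih]
      push_cast; ring
  have h1 : (∑ m ∈ Finset.range n, ((m:ℤ) - n))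
      = (∑ m ∈ Finset.range n, (m:ℤ)) - (n:ℤ) * n := by
    rw [Finset.sum_sub_distrib, Finset.sum_const, Finset.card_range, nsmul_eq_mul]
  linear_combination 2 * h1 + h2

lemma cancel_lemma (a1 a2 b1 b2 p r s X Y : ℂ) (ha1 : a1 ≠ 0) (hb1 : b1 ≠ 0)
    (hs : s ≠ 0) (hX : X ≠ 0) (hY : Y ≠ 0) (hp : p ≠ 0) (hr : r ≠ 0) :
    a1 * a2 * (b1 * b2) * (X * s * p * a1 * (Y * s * r * b1))⁻¹ * (X * Y) * (s * s)
      = a2 * b2 * (p * r)⁻¹ := by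
  have hD : X * s * p * a1 * (Y * s * r * b1) ≠ 0 := by
    simp [ha1, hb1, hs, hX, hY, hp, hr]
  rw [← div_eq_mul_inv, ← div_eq_mul_inv, div_mul_eq_mul_div, div_mul_eq_mul_div,
    div_eq_div_iff hD (mul_ne_zero hp hr)]
  ring

end aux

/-- Asymptotics of the weight `w(z q^k)` as `k → -∞`. -/
theorem weight_asymptotics (q : ℝ) (hq0 : 0 < q) (hq1 : q < 1) (z : ℝ) (hz : z ≠ 0)
    (c d : ℂ) (hc : c ≠ 0) (hd : d ≠ 0)
    (hcz : ∀ k : ℤ, c * (z : ℂ) ≠ (q : ℂ) ^ k) (hdz : ∀ k : ℤ, d * (z : ℂ) ≠ (q : ℂ) ^ k) :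
    Filter.Tendsto
      (fun k : ℤ =>
        theta (q : ℂ) (c * z) * theta (q : ℂ) (d * z) *
          (qp (q : ℂ) (c * z * (q : ℂ) ^ k) * qp (q : ℂ) (d * z * (q : ℂ) ^ k))⁻¹ *
          (c * d * (z : ℂ) ^ 2) ^ (-k) * (q : ℂ) ^ (-(k * (k - 1))))
      Filter.atBot (nhds 1) := by
  open Filter Complex in
  set Q : ℂ := (q : ℂ) with hQdef
  have hQ0 : Q ≠ 0 := by
    simp only [hQdef]
    exact_mod_cast hq0.ne'
  have hQn : ‖Q‖ < 1 := by
    simp only [hQdef, Complex.norm_real, Real.norm_eq_abs, abs_of_pos hq0]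
    exact hq1
  have hz' : (z : ℂ) ≠ 0 := by exact_mod_cast hz
  have hA0 : c * (z : ℂ) ≠ 0 := mul_ne_zero hc hz'
  have hB0 : d * (z : ℂ) ≠ 0 := mul_ne_zero hd hz'
  have hA1 : ∀ m : ℕ, c * (z : ℂ) * Q ^ m ≠ 1 := by
    simpa using ne_pow_helper hQ0 hcz 0
  have hB1 : ∀ m : ℕ, d * (z : ℂ) * Q ^ m ≠ 1 := by
    simpa using ne_pow_helper hQ0 hdz 0
  have hA2 : ∀ m : ℕ, Q / (c * (z : ℂ)) * Q ^ m ≠ 1 := div_ne_helper hQ0 hA0 hcz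
  have hB2 : ∀ m : ℕ, Q / (d * (z : ℂ)) * Q ^ m ≠ 1 := div_ne_helper hQ0 hB0 hdz
  have hqA : qp Q (c * (z : ℂ)) ≠ 0 := qp_ne_zero hQn _ hA1
  have hqB : qp Q (d * (z : ℂ)) ≠ 0 := qp_ne_zero hQn _ hB1
  have hqA2 : qp Q (Q / (c * (z : ℂ))) ≠ 0 := qp_ne_zero hQn _ hA2
  have hqB2 : qp Q (Q / (d * (z : ℂ))) ≠ 0 := qp_ne_zero hQn _ hB2
  set G : ℕ → ℂ := fun n =>
    qp Q (Q / (c * (z : ℂ))) * qp Q (Q / (d * (z : ℂ))) *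
      (qpn Q (Q / (c * (z : ℂ))) n * qpn Q (Q / (d * (z : ℂ))) n)⁻¹ with hGdef
  have hGlim : Filter.Tendsto G Filter.atTop (nhds 1) := by
    have t1 := qpn_tendsto hQn _ hA2
    have t2 := qpn_tendsto hQn _ hB2
    have hne := mul_ne_zero hqA2 hqB2
    have h3 := ((t1.mul t2).inv₀ hne).const_mul
      (qp Q (Q / (c * (z : ℂ))) * qp Q (Q / (d * (z : ℂ))))
    rw [mul_inv_cancel₀ hne] at h3
    exact h3
  have key : ∀ n : ℕ,
      theta Q (c * z) * theta Q (d * z) *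
        (qp Q (c * z * Q ^ (-(n:ℤ))) * qp Q (d * z * Q ^ (-(n:ℤ))))⁻¹ *
        (c * d * (z : ℂ) ^ 2) ^ (-(-(n:ℤ))) * Q ^ (-((-(n:ℤ)) * ((-(n:ℤ)) - 1))) = G n := by
    intro n
    have hpowQ : Q ^ (-((-(n:ℤ)) * ((-(n:ℤ)) - 1)))
        = Q ^ (∑ m ∈ Finset.range n, ((m:ℤ) - n)) * Q ^ (∑ m ∈ Finset.range n, ((m:ℤ) - n)) := by
      rw [← zpow_add₀ hQ0]
      congr 1
      linear_combination -(sum_range_sub_two_mul n)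
    have hpowz : (c * d * (z : ℂ) ^ 2) ^ (-(-(n:ℤ)))
        = (-(c * (z : ℂ))) ^ n * (-(d * (z : ℂ))) ^ n := by
      rw [neg_neg, zpow_natCast, ← mul_pow]
      congr 1
      ring
    rw [qp_shift hQn hQ0 hA0 hcz n, qp_shift hQn hQ0 hB0 hdz n, theta, theta, hpowQ, hpowz]
    simp only [hGdef]
    have hs : Q ^ (∑ m ∈ Finset.range n, ((m:ℤ) - n)) ≠ 0 := zpow_ne_zero _ hQ0
    have hX : (-(c * (z : ℂ))) ^ n ≠ 0 := pow_ne_zero _ (neg_ne_zero.mpr hA0)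
    have hY : (-(d * (z : ℂ))) ^ n ≠ 0 := pow_ne_zero _ (neg_ne_zero.mpr hB0)
    have hp : qpn Q (Q / (c * (z : ℂ))) n ≠ 0 := qpn_ne_zero _ hA2 n
    have hr : qpn Q (Q / (d * (z : ℂ))) n ≠ 0 := qpn_ne_zero _ hB2 n
    exact cancel_lemma _ _ _ _ _ _ _ _ _ hqA hqB hs hX hY hp hr
  have hcompose : Filter.Tendsto (fun k : ℤ => (-k).toNat) Filter.atBot Filter.atTop := by
    rw [Filter.tendsto_atTop]
    intro b
    filter_upwards [Filter.eventually_le_atBot (-(b:ℤ))] with k hk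
    omega
  refine Filter.Tendsto.congr' ?_ (hGlim.comp hcompose)
  filter_upwards [Filter.eventually_le_atBot (0:ℤ)] with k hk
  obtain ⟨n, rfl⟩ : ∃ n : ℕ, k = -(n:ℤ) := ⟨(-k).toNat, by omega⟩
  have hn : ((-(-(n:ℤ))).toNat) = n := by omega
  simp only [Function.comp_apply, hn]
  exact (key n).symm
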